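/- Regret bound for strongly convex online gradient descent with decaying stepsize: let f_t : F → ℝ be σ-strongly convex differentiable functions on a closed convex F ⊆ ℝ^n with ‖∇f_t(x)‖ ≤ G for all x ∈ F and all t. Define x_{t+1} = Π_F(x_t − η_t ∇f_t(x_t)) with η_t = 1/(σ t), where Π_F is Euclidean projection onto F. Then ∑_{t=1}^T f_t(x_t) − min_{x∈F} ∑_{t=1}^T f_t(x) ≤ (G²/(2σ))(1 + log T). -/

import Mathlib

open RealInnerProductSpace

private lemma one_div_one_div' (c two : ℝ) (hc : c ≠ 0) : 1 / (two * (1 / c)) = c / two := by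
  field_simp

private lemma tele_sum (b : ℕ → ℝ) : ∀ T : ℕ,
    ∑ t ∈ Finset.Icc 1 T, (b t - b (t + 1)) = b 1 - b (T + 1)
  | 0 => by simp
  | (T + 1) => by
    rw [Finset.sum_Icc_succ_top (by omega : 1 ≤ T + 1), tele_sum b T]
    ring

set_option maxHeartbeats 2000000 in
theorem ogd_strongly_convex_log_regret (n : ℕ) (σ G : ℝ) (hσ : 0 < σ) (hG : 0 < G)
    (F : Set (EuclideanSpace ℝ (Fin n))) (hFne : F.Nonempty) (hFc : IsClosed F)
    (hFconv : Convex ℝ F)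
    (f : ℕ → EuclideanSpace ℝ (Fin n) → ℝ)
    (grad : ℕ → EuclideanSpace ℝ (Fin n) → EuclideanSpace ℝ (Fin n))
    (hsc : ∀ t : ℕ, ∀ x ∈ F, ∀ y ∈ F,
      f t x - f t y ≥ ⟪grad t y, x - y⟫ + σ / 2 * ‖x - y‖ ^ 2)
    (hgrad : ∀ t : ℕ, ∀ x ∈ F, ‖grad t x‖ ≤ G)
    (proj : EuclideanSpace ℝ (Fin n) → EuclideanSpace ℝ (Fin n))
    (hproj : ∀ z, proj z ∈ F ∧ ∀ x ∈ F, ‖proj z - z‖ ≤ ‖x - z‖)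
    (x : ℕ → EuclideanSpace ℝ (Fin n)) (hx1 : x 1 ∈ F)
    (hupdate : ∀ t : ℕ, 1 ≤ t →
      x (t + 1) = proj (x t - (1 / (σ * t)) • grad t (x t)))
    (T : ℕ) (hT : 1 ≤ T)
    (xstar : EuclideanSpace ℝ (Fin n)) (hxstar : xstar ∈ F)
    (hmin : ∀ y ∈ F, ∑ t ∈ Finset.Icc 1 T, f t xstar ≤ ∑ t ∈ Finset.Icc 1 T, f t y) :
    ∑ t ∈ Finset.Icc 1 T, f t (x t) - ∑ t ∈ Finset.Icc 1 T, f t xstar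
      ≤ G ^ 2 / (2 * σ) * (1 + Real.log T) := by
  -- iterates stay in F
  have hxF : ∀ t : ℕ, 1 ≤ t → x t ∈ F := by
    intro t ht
    induction t with
    | zero => omega
    | succ k ih =>
      rcases Nat.eq_zero_or_pos k with hk | hk
      · subst hk; exact hx1
      · rw [hupdate k hk]; exact (hproj _).1
  -- variational inequality for the projection
  have hvar : ∀ z : EuclideanSpace ℝ (Fin n), ∀ w ∈ F,
      ⟪z - proj z, w - proj z⟫ ≤ 0 := by
    intro z w hw
    set p := proj z with hp
    have key : ∀ lam : ℝ, 0 < lam → lam ≤ 1 →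
        0 ≤ 2 * lam * ⟪p - z, w - p⟫ + lam ^ 2 * ‖w - p‖ ^ 2 := by
      intro lam hl0 hl1
      have hmem : p + lam • (w - p) ∈ F := by
        have := hFconv (hproj z).1 hw (by linarith : (0:ℝ) ≤ 1 - lam) hl0.le (by ring)
        convert this using 1
        rw [smul_sub]; module
      have h1 : ‖p - z‖ ≤ ‖p + lam • (w - p) - z‖ := (hproj z).2 _ hmem
      have h2 : ‖p - z‖ ^ 2 ≤ ‖p + lam • (w - p) - z‖ ^ 2 :=
        pow_le_pow_left₀ (norm_nonneg _) h1 2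
      have h3 : p + lam • (w - p) - z = (p - z) + lam • (w - p) := by abel
      rw [h3, norm_add_sq_real] at h2
      rw [real_inner_smul_right, norm_smul, mul_pow] at h2
      simp only [Real.norm_eq_abs, sq_abs] at h2
      nlinarith
    by_contra hcon
    push_neg at hcon
    set c : ℝ := ⟪z - p, w - p⟫ with hc
    have hc0 : 0 < c := hcon
    have hcp : ⟪p - z, w - p⟫ = -c := by
      rw [hc, ← inner_neg_left]; congr 1; abel
    set d : ℝ := ‖w - p‖ ^ 2 with hd
    have hd0 : 0 < d := by
      rcases lt_or_eq_of_le (sq_nonneg ‖w - p‖) with h | h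
      · exact h
      · exfalso
        have : ‖w - p‖ = 0 := by nlinarith [norm_nonneg (w - p)]
        have hwp : w - p = 0 := norm_eq_zero.mp this
        rw [hc, hwp, inner_zero_right] at hc0
        exact lt_irrefl _ hc0
    set lam : ℝ := min 1 (c / d) with hlam
    have hl0 : 0 < lam := lt_min one_pos (div_pos hc0 hd0)
    have hl1 : lam ≤ 1 := min_le_left _ _
    have := key lam hl0 hl1
    rw [hcp] at this
    have hld : lam * d ≤ c := by
      have : lam ≤ c / d := min_le_right _ _
      calc lam * d ≤ (c / d) * d := by nlinarith
        _ = c := by field_simp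
    nlinarith
  -- squared-distance contraction of projection
  have hcontr : ∀ z : EuclideanSpace ℝ (Fin n),
      ‖proj z - xstar‖ ^ 2 ≤ ‖z - xstar‖ ^ 2 := by
    intro z
    set p := proj z
    have hdecomp : z - xstar = (z - p) + (p - xstar) := by abel
    have := hvar z xstar hxstar
    have hinner : ⟪z - p, p - xstar⟫ ≥ 0 := by
      have h : p - xstar = -(xstar - p) := by abel
      rw [h, inner_neg_right]; linarith
    calc ‖p - xstar‖ ^ 2
        ≤ ‖z - p‖ ^ 2 + 2 * ⟪z - p, p - xstar⟫ + ‖p - xstar‖ ^ 2 := by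
          nlinarith [sq_nonneg ‖z - p‖]
      _ = ‖z - xstar‖ ^ 2 := by rw [hdecomp, norm_add_sq_real]
  -- per-step bound
  set a : ℕ → ℝ := fun t => ‖x t - xstar‖ ^ 2 with ha
  have hstep : ∀ t : ℕ, 1 ≤ t →
      f t (x t) - f t xstar ≤
        σ * t / 2 * (a t - a (t + 1)) - σ / 2 * a t + G ^ 2 / (2 * σ * t) := by
    intro t ht
    have htR : (0:ℝ) < t := by exact_mod_cast ht
    obtain ⟨η, hη⟩ : ∃ η : ℝ, η = 1 / (σ * t) := ⟨_, rfl⟩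
    have hη0 : 0 < η := by rw [hη]; positivity
    obtain ⟨g, hg⟩ : ∃ g, g = grad t (x t) := ⟨_, rfl⟩
    have hgG : ‖g‖ ≤ G := hg ▸ hgrad t (x t) (hxF t ht)
    -- expansion of the gradient step
    have hexp : ‖x t - η • g - xstar‖ ^ 2
        = a t - 2 * η * ⟪g, x t - xstar⟫ + η ^ 2 * ‖g‖ ^ 2 := by
      have h1 : x t - η • g - xstar = (x t - xstar) - η • g := by abel
      rw [h1, norm_sub_sq_real, real_inner_smul_right, norm_smul, mul_pow]
      simp only [Real.norm_eq_abs, sq_abs]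
      rw [real_inner_comm]
      ring
    have hax : a (t + 1) ≤ a t - 2 * η * ⟪g, x t - xstar⟫ + η ^ 2 * ‖g‖ ^ 2 := by
      rw [← hexp]
      have := hcontr (x t - η • g)
      have hupd : x (t + 1) = proj (x t - η • g) := by
        rw [hη, hg]; exact hupdate t ht
      simp only [ha]
      rw [hupd]
      exact this
    -- strong convexity
    have hscv := hsc t xstar hxstar (x t) (hxF t ht)
    rw [← hg] at hscv
    have hfs : f t (x t) - f t xstar ≤ ⟪g, x t - xstar⟫ - σ / 2 * a t := by
      have h : ⟪g, xstar - x t⟫ = -⟪g, x t - xstar⟫ := by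
        rw [← inner_neg_right]; congr 1; abel
      have hnorm : ‖xstar - x t‖ = ‖x t - xstar‖ := norm_sub_rev _ _
      rw [h, hnorm] at hscv
      simp only [ha]
      linarith
    -- combine
    have h2η : 0 < 2 * η := by linarith
    have hip : ⟪g, x t - xstar⟫ ≤ (a t - a (t + 1)) / (2 * η) + η / 2 * ‖g‖ ^ 2 := by
      rw [div_add' _ _ _ (ne_of_gt h2η), le_div_iff₀ h2η]
      nlinarith
    have hησ : 1 / (2 * η) = σ * t / 2 := by
      rw [hη]; rw [one_div_one_div' (σ * ↑t) 2 (by positivity)]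
    have hηG : η / 2 * ‖g‖ ^ 2 ≤ G ^ 2 / (2 * σ * t) := by
      have h1 : η / 2 * ‖g‖ ^ 2 ≤ η / 2 * G ^ 2 := by
        have : ‖g‖ ^ 2 ≤ G ^ 2 := by nlinarith [norm_nonneg g]
        nlinarith
      have h2 : η / 2 * G ^ 2 = G ^ 2 / (2 * σ * t) := by
        rw [hη]; field_simp
      linarith
    have hdiv : (a t - a (t + 1)) / (2 * η) = σ * t / 2 * (a t - a (t + 1)) := by
      rw [div_eq_mul_inv, ← one_div, hησ]; ring
    rw [hdiv] at hip
    linarith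
  -- sum up
  rw [← Finset.sum_sub_distrib]
  have hsum1 : ∑ t ∈ Finset.Icc 1 T, (f t (x t) - f t xstar)
      ≤ ∑ t ∈ Finset.Icc 1 T,
        (σ * t / 2 * (a t - a (t + 1)) - σ / 2 * a t + G ^ 2 / (2 * σ * t)) := by
    apply Finset.sum_le_sum
    intro t htmem
    exact hstep t (Finset.mem_Icc.mp htmem).1
  set b : ℕ → ℝ := fun t => σ * ((t : ℝ) - 1) / 2 * a t with hb
  have hsplit : ∀ t ∈ Finset.Icc 1 T,
      σ * t / 2 * (a t - a (t + 1)) - σ / 2 * a t + G ^ 2 / (2 * σ * t)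
        = (b t - b (t + 1)) + G ^ 2 / (2 * σ * t) := by
    intro t _
    simp only [hb]
    push_cast
    ring
  rw [Finset.sum_congr rfl hsplit, Finset.sum_add_distrib, tele_sum b T] at hsum1
  have hb1 : b 1 = 0 := by simp [hb]
  have hbT : 0 ≤ b (T + 1) := by
    simp only [hb, ha]
    have : (0:ℝ) ≤ (T + 1 : ℕ) - 1 := by push_cast; linarith [Nat.cast_nonneg (α := ℝ) T]
    positivity
  have hharm : ∑ t ∈ Finset.Icc 1 T, G ^ 2 / (2 * σ * t)
      ≤ G ^ 2 / (2 * σ) * (1 + Real.log T) := by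
    have hfac : ∀ t ∈ Finset.Icc 1 T, G ^ 2 / (2 * σ * t)
        = G ^ 2 / (2 * σ) * ((t : ℝ))⁻¹ := by
      intro t htmem
      have ht1 := (Finset.mem_Icc.mp htmem).1
      have htR : (0:ℝ) < t := by exact_mod_cast ht1
      field_simp
    rw [Finset.sum_congr rfl hfac, ← Finset.mul_sum]
    have hH : ∑ t ∈ Finset.Icc 1 T, ((t : ℝ))⁻¹ ≤ 1 + Real.log T := by
      have := harmonic_le_one_add_log T
      rw [harmonic_eq_sum_Icc] at this
      push_cast at this
      exact this
    have hpos : 0 ≤ G ^ 2 / (2 * σ) := by positivity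
    exact mul_le_mul_of_nonneg_left hH hpos
  calc ∑ t ∈ Finset.Icc 1 T, (f t (x t) - f t xstar)
      ≤ (b 1 - b (T + 1)) + ∑ t ∈ Finset.Icc 1 T, G ^ 2 / (2 * σ * t) := hsum1
    _ ≤ ∑ t ∈ Finset.Icc 1 T, G ^ 2 / (2 * σ * t) := by rw [hb1]; linarith
    _ ≤ G ^ 2 / (2 * σ) * (1 + Real.log T) := hharm
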